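/- With notation as above (λ a dominant SL_n-coweight with λ = Σ m_i α_{i*}, k = m_1, τ the standard embedding of coweight lattices of SL_n into SL_{kn}), one has τ(λ) ≤ kn·ϖ_1 in the coweight lattice of SL_{kn}, i.e. kn·ϖ_1 − τ(λ) is a nonnegative integer combination of simple coroots of SL_{kn}. -/

import Mathlib

/-- The `i`-th fundamental coweight `ϖ_i` of `SL_N`, as a vector in `ℚ^N`. -/
def varpi (N i : ℕ) : Fin N → ℚ :=
  fun j => if (j : ℕ) < i then 1 - (i : ℚ) / N else -((i : ℚ) / N)

/-- The `j`-th simple coroot `α_j = e_j - e_{j+1}` of `SL_N` (1-based `j`). -/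
def alphaC (N j : ℕ) : Fin N → ℚ :=
  fun x => (if (x : ℕ) = j - 1 then 1 else 0) - (if (x : ℕ) = j then 1 else 0)

/-- Let `λ = ∑_i λ_i ϖ_i = ∑_i m_i α_{i*}` be a dominant `SL_n`-coweight, `k = m_1`,
and `τ` the standard embedding of the coweight lattice of `SL_n` into that of
`SL_{kn}` (sending `ϖ_i ↦ ϖ_i`).  Then `τ(λ) ≤ kn ϖ_1`, i.e. `kn ϖ_1 - τ(λ)` is a
nonnegative integer combination of simple coroots of `SL_{kn}`. -/
theorem tau_lambda_le_kn_varpi_one (n k : ℕ) (hn : 2 ≤ n) (hk : 1 ≤ k)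
    (lam m : ℕ → ℕ) (hkm : k = m 1)
    (h : (∑ i ∈ Finset.Icc 1 (n - 1), (lam i : ℚ) • varpi n i) =
        ∑ i ∈ Finset.Icc 1 (n - 1), (m i : ℚ) • alphaC n (n - i)) :
    ∃ c : ℕ → ℕ,
      ((k * n : ℕ) : ℚ) • varpi (k * n) 1 -
          ∑ i ∈ Finset.Icc 1 (n - 1), (lam i : ℚ) • varpi (k * n) i =
        ∑ j ∈ Finset.Icc 1 (k * n - 1), (c j : ℚ) • alphaC (k * n) j := by
  have hNn : n ≤ k * n := Nat.le_mul_of_pos_left n (by omega)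
  have hNpos : 0 < k * n := by omega
  have hN2 : 2 ≤ k * n := by omega
  -- Step 1: extract ∑ lam i * i = k * n from `h` at coordinate n-1
  have h' := congrFun h ⟨n - 1, by omega⟩
  simp only [Finset.sum_apply, Pi.smul_apply, smul_eq_mul, varpi, alphaC] at h'
  have hL : ∀ i ∈ Finset.Icc 1 (n - 1),
      (lam i : ℚ) * (if n - 1 < i then 1 - (i : ℚ) / n else -((i : ℚ) / n))
        = -((lam i : ℚ) * i / n) := by
    intro i hi
    rw [Finset.mem_Icc] at hi
    rw [if_neg (by omega)]
    ring
  have hR : ∀ i ∈ Finset.Icc 1 (n - 1),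
      (m i : ℚ) * ((if n - 1 = n - i - 1 then 1 else 0) - if n - 1 = n - i then 1 else 0)
        = if i = 1 then -(m 1 : ℚ) else 0 := by
    intro i hi
    rw [Finset.mem_Icc] at hi
    rcases eq_or_ne i 1 with h1 | h1
    · subst h1
      rw [if_neg (by omega), if_pos (by omega), if_pos rfl]
      ring
    · rw [if_neg (by omega), if_neg (by omega), if_neg h1]
      ring
  rw [Finset.sum_congr rfl hL, Finset.sum_congr rfl hR,
    Finset.sum_ite_eq' (Finset.Icc 1 (n - 1)) 1 (fun _ => -(m 1 : ℚ)),
    if_pos (Finset.mem_Icc.mpr ⟨le_refl 1, by omega⟩)] at h'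
  have hn0 : (n : ℚ) ≠ 0 := by positivity
  have hSQ : (∑ i ∈ Finset.Icc 1 (n - 1), (lam i : ℚ) * i) = (k : ℚ) * n := by
    have h2 : (∑ i ∈ Finset.Icc 1 (n - 1), -((lam i : ℚ) * i / n))
        = -((∑ i ∈ Finset.Icc 1 (n - 1), (lam i : ℚ) * i) / n) := by
      rw [Finset.sum_div, ← Finset.sum_neg_distrib]
    rw [h2] at h'
    rw [hkm]
    field_simp at h'
    linarith [h']
  have hSn : (∑ i ∈ Finset.Icc 1 (n - 1), lam i * i) = k * n := by
    have : ((∑ i ∈ Finset.Icc 1 (n - 1), lam i * i : ℕ) : ℚ) = ((k * n : ℕ) : ℚ) := by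
      push_cast
      exact hSQ
    exact_mod_cast this
  -- Step 2: the coefficients
  have hmin : ∀ j, (∑ i ∈ Finset.Icc 1 (n - 1), lam i * min i j) ≤ k * n := by
    intro j
    rw [← hSn]
    exact Finset.sum_le_sum fun i _ => Nat.mul_le_mul_left _ (min_le_left _ _)
  refine ⟨fun j => k * n - ∑ i ∈ Finset.Icc 1 (n - 1), lam i * min i j, ?_⟩
  set D : ℕ → ℚ := fun j => ((k * n : ℕ) : ℚ) -
    ∑ i ∈ Finset.Icc 1 (n - 1), (lam i : ℚ) * ((min i j : ℕ) : ℚ) with hD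
  have hc : ∀ j, ((k * n - ∑ i ∈ Finset.Icc 1 (n - 1), lam i * min i j : ℕ) : ℚ) = D j := by
    intro j
    rw [Nat.cast_sub (hmin j), hD]
    push_cast
    ring
  have hDtop : D (k * n) = 0 := by
    rw [hD]
    simp only
    have heq : ∀ i ∈ Finset.Icc 1 (n - 1), (lam i : ℚ) * ((min i (k * n) : ℕ) : ℚ)
        = (lam i : ℚ) * i := by
      intro i hi
      rw [Finset.mem_Icc] at hi
      rw [min_eq_left (by omega)]
    rw [Finset.sum_congr rfl heq, hSQ]
    push_cast
    ring
  have hD0 : D 0 = ((k * n : ℕ) : ℚ) := by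
    simp [hD]
  -- Step 3: pointwise identity
  funext x
  simp only [Pi.sub_apply, Finset.sum_apply, Pi.smul_apply, smul_eq_mul, varpi, alphaC]
  have hxlt : (x : ℕ) < k * n := x.isLt
  -- RHS: telescoping
  have hRHS : (∑ j ∈ Finset.Icc 1 (k * n - 1),
      ((k * n - ∑ i ∈ Finset.Icc 1 (n - 1), lam i * min i j : ℕ) : ℚ) *
        ((if (x : ℕ) = j - 1 then 1 else 0) - if (x : ℕ) = j then 1 else 0))
      = D ((x : ℕ) + 1) - D (x : ℕ) + (if (x : ℕ) = 0 then ((k * n : ℕ) : ℚ) else 0) := by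
    have step : ∀ j ∈ Finset.Icc 1 (k * n - 1),
        ((k * n - ∑ i ∈ Finset.Icc 1 (n - 1), lam i * min i j : ℕ) : ℚ) *
          ((if (x : ℕ) = j - 1 then 1 else 0) - if (x : ℕ) = j then 1 else 0)
        = (if j = (x : ℕ) + 1 then D j else 0) - (if j = (x : ℕ) then D j else 0) := by
      intro j hj
      rw [Finset.mem_Icc] at hj
      rw [hc j]
      rcases eq_or_ne j ((x : ℕ) + 1) with h1 | h1
      · rw [if_pos h1, if_pos (by omega), if_neg (by omega), if_neg (by omega)]
        ring
      · rcases eq_or_ne j (x : ℕ) with h2 | h2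
        · rw [if_pos h2, if_neg h1, if_neg (by omega), if_pos (by omega)]
          ring
        · rw [if_neg h1, if_neg h2, if_neg (by omega), if_neg (by omega)]
          ring
    rw [Finset.sum_congr rfl step, Finset.sum_sub_distrib,
      Finset.sum_ite_eq' (Finset.Icc 1 (k * n - 1)) ((x : ℕ) + 1) D,
      Finset.sum_ite_eq' (Finset.Icc 1 (k * n - 1)) ((x : ℕ)) D]
    rcases eq_or_ne (x : ℕ) (k * n - 1) with htop | htop
    · rw [if_neg (by rw [Finset.mem_Icc]; omega)]
      rcases eq_or_ne (x : ℕ) 0 with h0 | h0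
      · omega
      · rw [if_pos (Finset.mem_Icc.mpr (by omega)), if_neg h0, htop]
        have h3 : k * n - 1 + 1 = k * n := by omega
        rw [h3, hDtop]
        ring
    · rw [if_pos (Finset.mem_Icc.mpr (by omega))]
      rcases eq_or_ne (x : ℕ) 0 with h0 | h0
      · rw [if_neg (by rw [Finset.mem_Icc]; omega), if_pos h0, h0, hD0]
        ring
      · rw [if_pos (Finset.mem_Icc.mpr (by omega)), if_neg h0]
        ring
  rw [hRHS]
  -- LHS computation
  have hkn0 : ((k * n : ℕ) : ℚ) ≠ 0 := by positivity
  have hDdiff : D (x : ℕ) - D ((x : ℕ) + 1)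
      = ∑ i ∈ Finset.Icc 1 (n - 1), (lam i : ℚ) * (if (x : ℕ) < i then 1 else 0) := by
    have h2 : D (x : ℕ) - D ((x : ℕ) + 1) = ∑ i ∈ Finset.Icc 1 (n - 1),
        ((lam i : ℚ) * ((min i ((x : ℕ) + 1) : ℕ) : ℚ)
          - (lam i : ℚ) * ((min i (x : ℕ) : ℕ) : ℚ)) := by
      rw [hD, Finset.sum_sub_distrib]
      ring
    rw [h2]
    apply Finset.sum_congr rfl
    intro i hi
    rcases Nat.lt_or_ge (x : ℕ) i with hlt | hge
    · rw [if_pos hlt]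
      have h1 : min i ((x : ℕ) + 1) = min i (x : ℕ) + 1 := by omega
      rw [h1]
      push_cast
      ring
    · rw [if_neg (by omega)]
      have h1 : min i ((x : ℕ) + 1) = min i (x : ℕ) := by omega
      rw [h1]
      ring
  have hvarpi1 : ((k * n : ℕ) : ℚ) *
      (if (x : ℕ) < 1 then 1 - ((1 : ℕ) : ℚ) / ((k * n : ℕ) : ℚ)
        else -(((1 : ℕ) : ℚ) / ((k * n : ℕ) : ℚ)))
      = (if (x : ℕ) = 0 then ((k * n : ℕ) : ℚ) else 0) - 1 := by
    rcases eq_or_ne (x : ℕ) 0 with h0 | h0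
    · rw [if_pos (by omega), if_pos h0]
      rw [Nat.cast_one]
      field_simp
    · rw [if_neg (by omega), if_neg h0]
      rw [Nat.cast_one]
      field_simp
      ring
  have hsum2 : (∑ i ∈ Finset.Icc 1 (n - 1), (lam i : ℚ) *
      (if (x : ℕ) < i then 1 - (i : ℚ) / ((k * n : ℕ) : ℚ) else -((i : ℚ) / ((k * n : ℕ) : ℚ))))
      = (∑ i ∈ Finset.Icc 1 (n - 1), (lam i : ℚ) * (if (x : ℕ) < i then 1 else 0)) - 1 := by
    have expand : ∀ i ∈ Finset.Icc 1 (n - 1), (lam i : ℚ) *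
        (if (x : ℕ) < i then 1 - (i : ℚ) / ((k * n : ℕ) : ℚ)
          else -((i : ℚ) / ((k * n : ℕ) : ℚ)))
        = (lam i : ℚ) * (if (x : ℕ) < i then 1 else 0)
          - ((lam i : ℚ) * i) / ((k * n : ℕ) : ℚ) := by
      intro i hi
      rcases Nat.lt_or_ge (x : ℕ) i with hlt | hge
      · rw [if_pos hlt, if_pos hlt]
        ring
      · rw [if_neg (by omega), if_neg (by omega)]
        ring
    rw [Finset.sum_congr rfl expand, Finset.sum_sub_distrib, ← Finset.sum_div, hSQ]
    have : ((k : ℚ) * n) / ((k * n : ℕ) : ℚ) = 1 := by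
      rw [Nat.cast_mul]
      field_simp
    rw [this]
  rw [hvarpi1, hsum2]
  rw [← hDdiff]
  ring
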